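/- arXiv:1510.01466 — 3 statements merged into one kernel-verified Lean document; each statement's English description precedes it below -/
import Mathlib

section
/- Let A be a commutative ring and M a free A-module with basis m_1, …, m_n. Then the k-th graded piece Γ_k(M) of the divided power algebra Γ_A(M) is a free A-module with basis the set of products of divided powers {m_1^{[i_1]} · m_2^{[i_2]} ⋯ m_n^{[i_n]} : i_1 + ⋯ + i_n = k, i_j ≥ 0}. -/
open scoped TensorProduct

universe u v

/-- A system of divided powers on a module `M` with values in a commutative `A`-algebra `B`. -/
structure IsDPSystem (A : Type u) [CommRing A] {M : Type v} [AddCommGroup M] [Module A M]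
    {B : Type*} [CommRing B] [Algebra A B] (φ : ℕ → M → B) : Prop where
  zero : ∀ m, φ 0 m = 1
  smul : ∀ (k : ℕ) (a : A) (m : M), φ k (a • m) = a ^ k • φ k m
  add : ∀ (k : ℕ) (m n : M),
    φ k (m + n) = ∑ ij ∈ Finset.HasAntidiagonal.antidiagonal k, φ ij.1 m * φ ij.2 n
  mul : ∀ (i j : ℕ) (m : M), φ i m * φ j m = ((i + j).choose i) • φ (i + j) m

/-- The divided power algebra `Γ_A(M)`, presented as a graded commutative `A`-algebra
equipped with divided power operations `dpow k : M → Γ_k`, universal among commutative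
`A`-algebras receiving a system of divided powers of `M`. -/
structure DividedPowerAlgebra' (A : Type u) [CommRing A] (M : Type v) [AddCommGroup M]
    [Module A M] where
  Γ : Type (max u v)
  [commRing : CommRing Γ]
  [algebra : Algebra A Γ]
  grading : ℕ → Submodule A Γ
  [gradedAlgebra : GradedAlgebra grading]
  dpow : ℕ → M → Γ
  dpow_mem : ∀ (k : ℕ) (m : M), dpow k m ∈ grading k
  isDP : IsDPSystem A dpow
  dpow_one_injective : Function.Injective (dpow 1)
  grading_one_eq : grading 1 = Submodule.span A (Set.range (dpow 1))
  lift : ∀ {B : Type (max u v)} [CommRing B] [Algebra A B] (φ : ℕ → M → B),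
      IsDPSystem A φ → (Γ →ₐ[A] B)
  lift_dpow : ∀ {B : Type (max u v)} [CommRing B] [Algebra A B] (φ : ℕ → M → B)
      (h : IsDPSystem A φ) (k : ℕ) (m : M), lift φ h (dpow k m) = φ k m
  lift_unique : ∀ {B : Type (max u v)} [CommRing B] [Algebra A B] (φ : ℕ → M → B)
      (h : IsDPSystem A φ) (g : Γ →ₐ[A] B), (∀ k m, g (dpow k m) = φ k m) → g = lift φ h

attribute [instance] DividedPowerAlgebra'.commRing DividedPowerAlgebra'.algebra
  DividedPowerAlgebra'.gradedAlgebra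

set_option maxHeartbeats 1000000
set_option synthInstance.maxHeartbeats 1000000

open Finset

/-- A divided power sequence in a commutative ring. -/
def IsDPSeq {B : Type*} [CommRing B] (x : ℕ → B) : Prop :=
  ∀ i j : ℕ, x i * x j = ((i + j).choose i) • x (i + j)

lemma IsDPSeq.conv {B : Type*} [CommRing B] {x y : ℕ → B}
    (hx : IsDPSeq x) (hy : IsDPSeq y) :
    IsDPSeq (fun k => ∑ p ∈ antidiagonal k, x p.1 * y p.2) := by
  intro i j
  have LHS : (∑ p ∈ antidiagonal i, x p.1 * y p.2) * (∑ q ∈ antidiagonal j, x q.1 * y q.2)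
      = ∑ pq ∈ antidiagonal i ×ˢ antidiagonal j,
          (((pq.1.1 + pq.2.1).choose pq.1.1) * ((pq.1.2 + pq.2.2).choose pq.1.2)) •
            (x (pq.1.1 + pq.2.1) * y (pq.1.2 + pq.2.2)) := by
    rw [Finset.sum_mul_sum, ← Finset.sum_product']
    refine Finset.sum_congr rfl fun pq _ => ?_
    rw [mul_mul_mul_comm, hx pq.1.1 pq.2.1, hy pq.1.2 pq.2.2, smul_mul_smul_comm]
  have RHS : ((i + j).choose i) • ∑ r ∈ antidiagonal (i + j), x r.1 * y r.2
      = ∑ rs ∈ antidiagonal (i + j) ×ˢ antidiagonal i,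
          ((rs.1.1.choose rs.2.1) * (rs.1.2.choose rs.2.2)) • (x rs.1.1 * y rs.1.2) := by
    rw [Finset.smul_sum, Finset.sum_product]
    refine Finset.sum_congr rfl fun r hr => ?_
    show (i + j).choose i • (x r.1 * y r.2)
        = ∑ s ∈ antidiagonal i, (r.1.choose s.1 * r.2.choose s.2) • (x r.1 * y r.2)
    rw [← Finset.sum_smul, ← Nat.add_choose_eq, Finset.HasAntidiagonal.mem_antidiagonal.mp hr]
  rw [LHS, RHS]
  rw [← Finset.sum_filter_of_ne (p := fun rs => rs.2.1 ≤ rs.1.1 ∧ rs.2.2 ≤ rs.1.2)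
    (s := antidiagonal (i + j) ×ˢ antidiagonal i)]
  · refine Finset.sum_nbij' (i := fun pq => ((pq.1.1 + pq.2.1, pq.1.2 + pq.2.2), pq.1))
      (j := fun rs => (rs.2, (rs.1.1 - rs.2.1, rs.1.2 - rs.2.2))) ?_ ?_ ?_ ?_ ?_
    · rintro ⟨⟨a, b⟩, ⟨c, d⟩⟩ h
      simp only [Finset.mem_product, Finset.HasAntidiagonal.mem_antidiagonal] at h
      simp only [Finset.mem_filter, Finset.mem_product, Finset.HasAntidiagonal.mem_antidiagonal]
      omega
    · rintro ⟨⟨p, q⟩, ⟨a, b⟩⟩ h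
      obtain ⟨hmem, h1, h2⟩ := Finset.mem_filter.mp h
      simp only [Finset.mem_product, Finset.HasAntidiagonal.mem_antidiagonal] at hmem
      replace h1 : a ≤ p := h1
      replace h2 : b ≤ q := h2
      simp only [Finset.mem_product, Finset.HasAntidiagonal.mem_antidiagonal]
      omega
    · rintro ⟨⟨a, b⟩, ⟨c, d⟩⟩ h
      show ((a, b), (a + c - a, b + d - b)) = ((a, b), (c, d))
      rw [Nat.add_sub_cancel_left, Nat.add_sub_cancel_left]
    · rintro ⟨⟨p, q⟩, ⟨a, b⟩⟩ h
      obtain ⟨hmem, h1, h2⟩ := Finset.mem_filter.mp h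
      simp only [Finset.mem_product, Finset.HasAntidiagonal.mem_antidiagonal] at hmem
      replace h1 : a ≤ p := h1
      replace h2 : b ≤ q := h2
      show ((a + (p - a), b + (q - b)), (a, b)) = ((p, q), (a, b))
      rw [Nat.add_sub_cancel' h1, Nat.add_sub_cancel' h2]
    · rintro ⟨⟨a, b⟩, ⟨c, d⟩⟩ h
      rfl
  · rintro ⟨⟨p, q⟩, ⟨a, b⟩⟩ h hne
    by_contra hc
    push_neg at hc
    rcases Nat.lt_or_ge p a with hlt | hge
    · exact hne (by rw [Nat.choose_eq_zero_of_lt hlt, zero_mul, zero_smul])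
    · exact hne (by rw [Nat.choose_eq_zero_of_lt (hc hge), mul_zero, zero_smul])

namespace DPModel

variable (n : ℕ)

variable (n : ℕ)

/-- `x^α / α!` as an element of `ℚ[x_1,…,x_n]`. -/
noncomputable def dpQ (α : Fin n →₀ ℕ) : MvPolynomial (Fin n) ℚ :=
  MvPolynomial.monomial α (∏ j, ((α j).factorial : ℚ))⁻¹

lemma factProd_ne_zero (α : Fin n →₀ ℕ) : (∏ j, ((α j).factorial : ℚ)) ≠ 0 :=
  Finset.prod_ne_zero_iff.mpr fun j _ => Nat.cast_ne_zero.mpr (Nat.factorial_ne_zero _)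

lemma dpQ_mul (α β : Fin n →₀ ℕ) :
    dpQ n α * dpQ n β = (∏ j, ((α j + β j).choose (α j))) • dpQ n (α + β) := by
  rw [dpQ, dpQ, dpQ, MvPolynomial.monomial_mul, MvPolynomial.smul_monomial]
  congr 1
  have key : (∏ j, ((α j + β j).choose (α j)) : ℕ) * (∏ j, (α j).factorial) *
      (∏ j, (β j).factorial) = (∏ j, ((α + β) j).factorial) := by
    rw [← Finset.prod_mul_distrib, ← Finset.prod_mul_distrib]
    refine Finset.prod_congr rfl fun j _ => ?_
    rw [Finsupp.add_apply, Nat.choose_symm_add]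
    exact Nat.add_choose_mul_factorial_mul_factorial (α j) (β j)
  have h1 := factProd_ne_zero n α
  have h2 := factProd_ne_zero n β
  have h3 := factProd_ne_zero n (α + β)
  rw [nsmul_eq_mul]
  field_simp
  have keyQ := congrArg (fun t : ℕ => (t : ℚ)) key
  push_cast [Finsupp.add_apply] at keyQ
  simp only [Finsupp.add_apply]
  push_cast
  rw [← keyQ]
  ring


/-- The `dpQ` are a `ℚ`-basis of the polynomial ring. -/
noncomputable def dpQBasis : Module.Basis (Fin n →₀ ℕ) ℚ (MvPolynomial (Fin n) ℚ) :=
  (MvPolynomial.basisMonomials (Fin n) ℚ).unitsSMul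
    (fun α => Units.mk0 (∏ j, ((α j).factorial : ℚ))⁻¹ (inv_ne_zero (factProd_ne_zero n α)))

lemma dpQBasis_apply (α : Fin n →₀ ℕ) : dpQBasis n α = dpQ n α := by
  rw [dpQBasis, Module.Basis.unitsSMul_apply]
  show (∏ j, ((α j).factorial : ℚ))⁻¹ • (MvPolynomial.basisMonomials (Fin n) ℚ) α = _
  have : (MvPolynomial.basisMonomials (Fin n) ℚ) α = MvPolynomial.monomial α 1 := by
    exact congrFun (MvPolynomial.coe_basisMonomials _ _) α
  rw [this, MvPolynomial.smul_monomial, smul_eq_mul, mul_one, dpQ]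

lemma dpQ_linearIndependent : LinearIndependent ℤ (dpQ n) := by
  have h : LinearIndependent ℚ (dpQ n) := by
    have := (dpQBasis n).linearIndependent
    rwa [show ⇑(dpQBasis n) = dpQ n from funext (dpQBasis_apply n)] at this
  refine h.restrict_scalars ?_
  intro a b hab
  have : (a : ℚ) = b := by simpa using hab
  exact_mod_cast this


lemma dpQ_zero : dpQ n 0 = 1 := by
  rw [dpQ]
  simp

/-- The span of the `dpQ`. -/
noncomputable def Dsub : Submodule ℤ (MvPolynomial (Fin n) ℚ) :=
  Submodule.span ℤ (Set.range (dpQ n))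

lemma dpQ_mem (α : Fin n →₀ ℕ) : dpQ n α ∈ Dsub n :=
  Submodule.subset_span ⟨α, rfl⟩

lemma Dsub_mul_mem : ∀ x y : MvPolynomial (Fin n) ℚ,
    x ∈ Dsub n → y ∈ Dsub n → x * y ∈ Dsub n := by
  have h : Dsub n * Dsub n ≤ Dsub n := by
    rw [Dsub, Submodule.span_mul_span, Submodule.span_le]
    rintro z ⟨x, hx, y, hy, rfl⟩
    obtain ⟨α, rfl⟩ := hx
    obtain ⟨β, rfl⟩ := hy
    dsimp only
    rw [dpQ_mul]
    rw [SetLike.mem_coe, ← natCast_zsmul]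
    refine Submodule.smul_mem _ _ (Submodule.subset_span ?_)
    exact ⟨α + β, rfl⟩
  intro x y hx hy
  exact h (Submodule.mul_mem_mul hx hy)

/-- The divided power polynomial algebra over `ℤ`, as a subalgebra of `ℚ[x]`. -/
noncomputable def DA : Subalgebra ℤ (MvPolynomial (Fin n) ℚ) :=
  (Dsub n).toSubalgebra (dpQ_zero n ▸ dpQ_mem n 0) (Dsub_mul_mem n)

noncomputable def dD (α : Fin n →₀ ℕ) : DA n :=
  ⟨dpQ n α, dpQ_mem n α⟩

lemma dD_li : LinearIndependent ℤ (dD n) := by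
  apply LinearIndependent.of_comp ((DA n).val.toLinearMap)
  exact (dpQ_linearIndependent n : _)

lemma dD_span : ⊤ ≤ Submodule.span ℤ (Set.range (dD n)) := by
  intro x _
  have hx : x.1 ∈ Dsub n := x.2
  have hmap : Submodule.map ((DA n).val.toLinearMap) (Submodule.span ℤ (Set.range (dD n)))
      = Dsub n := by
    rw [Submodule.map_span]
    congr 1
    rw [← Set.range_comp]
    rfl
  rw [← hmap] at hx
  obtain ⟨y, hy, hyx⟩ := hx
  have : y = x := Subtype.ext hyx
  rwa [this] at hy

/-- Module.Basis of divided power monomials for the divided power polynomial ring. -/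
noncomputable def basD : Module.Basis (Fin n →₀ ℕ) ℤ (DA n) :=
  Module.Basis.mk (dD_li n) (dD_span n)

lemma basD_apply (α : Fin n →₀ ℕ) : basD n α = dD n α := Module.Basis.mk_apply _ _ _

lemma dD_mul (α β : Fin n →₀ ℕ) :
    dD n α * dD n β = (∏ j, ((α j + β j).choose (α j))) • dD n (α + β) := by
  apply Subtype.ext
  show dpQ n α * dpQ n β = _
  rw [dpQ_mul]
  rfl

lemma dD_zero : dD n 0 = 1 := Subtype.ext (dpQ_zero n)


variable (A : Type u) [CommRing A]

/-- The concrete model for the divided power algebra of `A^n`. -/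
noncomputable abbrev Bmod := A ⊗[ℤ] ↥(DA n)

noncomputable def eB (α : Fin n →₀ ℕ) : Bmod n A := 1 ⊗ₜ dD n α

lemma eB_mul (α β : Fin n →₀ ℕ) :
    eB n A α * eB n A β = (∏ j, ((α j + β j).choose (α j))) • eB n A (α + β) := by
  rw [eB, eB, eB, Algebra.TensorProduct.tmul_mul_tmul, one_mul, dD_mul, TensorProduct.tmul_smul]

lemma eB_zero : eB n A 0 = 1 := by
  rw [eB, dD_zero, Algebra.TensorProduct.one_def]

noncomputable def basB : Module.Basis (Fin n →₀ ℕ) A (Bmod n A) :=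
  Algebra.TensorProduct.basis A (basD n)

lemma basB_apply (α : Fin n →₀ ℕ) : basB n A α = eB n A α := by
  rw [basB, Algebra.TensorProduct.basis_apply, basD_apply, eB]

/-- Exponential power series of a single coordinate. -/
noncomputable def Ej (c : A) (j : Fin n) : PowerSeries (Bmod n A) :=
  PowerSeries.mk fun i => c ^ i • eB n A (Finsupp.single j i)

lemma coeff_Ej (c : A) (j : Fin n) (i : ℕ) :
    PowerSeries.coeff i (Ej n A c j) = c ^ i • eB n A (Finsupp.single j i) :=
  PowerSeries.coeff_mk _ _

lemma eB_single_mul (j : Fin n) (p q : ℕ) :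
    eB n A (Finsupp.single j p) * eB n A (Finsupp.single j q)
      = ((p + q).choose p) • eB n A (Finsupp.single j (p + q)) := by
  rw [eB_mul, ← Finsupp.single_add]
  congr 1
  rw [Finset.prod_eq_single j]
  · rw [Finsupp.single_eq_same, Finsupp.single_eq_same]
  · intro t _ ht
    simp [Finsupp.single_eq_of_ne' (Ne.symm ht)]
  · intro h
    exact absurd (Finset.mem_univ j) h

lemma Ej_dpseq (c : A) (j : Fin n) :
    IsDPSeq fun i => PowerSeries.coeff i (Ej n A c j) := by
  intro p q
  dsimp only
  rw [coeff_Ej, coeff_Ej, coeff_Ej, smul_mul_smul_comm, ← pow_add, eB_single_mul,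
    smul_comm]

lemma Ej_add (c d : A) (j : Fin n) : Ej n A (c + d) j = Ej n A c j * Ej n A d j := by
  ext i
  rw [PowerSeries.coeff_mul, coeff_Ej]
  have : ∀ p ∈ antidiagonal i,
      PowerSeries.coeff p.1 (Ej n A c j) * PowerSeries.coeff p.2 (Ej n A d j)
        = ((i.choose p.1 : A) * (c ^ p.1 * d ^ p.2)) • eB n A (Finsupp.single j i) := by
    intro p hp
    have hpq : p.1 + p.2 = i := Finset.HasAntidiagonal.mem_antidiagonal.mp hp
    rw [coeff_Ej, coeff_Ej, smul_mul_smul_comm, eB_single_mul, hpq, ← Nat.cast_smul_eq_nsmul A,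
      smul_smul, mul_comm ((c ^ p.1) * (d ^ p.2))]
  rw [Finset.sum_congr rfl this, ← Finset.sum_smul]
  have h2 : (∑ p ∈ antidiagonal i, (i.choose p.1 : A) * (c ^ p.1 * d ^ p.2)) = (c + d) ^ i := by
    rw [Commute.add_pow' (Commute.all c d) i]
    exact Finset.sum_congr rfl fun p _ => (nsmul_eq_mul _ _).symm
  rw [h2]

lemma Ej_zero (j : Fin n) : Ej n A 0 j = 1 := by
  ext i
  rw [coeff_Ej, PowerSeries.coeff_one]
  cases i with
  | zero => simp [eB_zero]
  | succ i => simp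

lemma Ej_rescale (a c : A) (j : Fin n) :
    Ej n A (a * c) j = PowerSeries.rescale (algebraMap A (Bmod n A) a) (Ej n A c j) := by
  ext i
  rw [PowerSeries.coeff_rescale, coeff_Ej, coeff_Ej, ← map_pow, ← Algebra.smul_def,
    mul_pow, mul_smul]

variable {M : Type v} [AddCommGroup M] [Module A M] (b : Module.Basis (Fin n) A M)

noncomputable def Emap (m : M) : PowerSeries (Bmod n A) := ∏ j, Ej n A (b.repr m j) j

noncomputable def phi (k : ℕ) (m : M) : Bmod n A := PowerSeries.coeff k (Emap n A b m)

lemma Emap_dpseq (m : M) : IsDPSeq fun i => PowerSeries.coeff i (Emap n A b m) := by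
  rw [Emap]
  refine Finset.prod_induction _ (fun f => IsDPSeq fun i => PowerSeries.coeff i f)
    (fun f g hf hg => ?_) (fun i j => ?_) (fun j _ => Ej_dpseq n A _ j)
  · intro i j
    simp only [PowerSeries.coeff_mul]
    exact hf.conv hg i j
  · simp only [PowerSeries.coeff_one]
    rcases Nat.eq_zero_or_pos i with rfl | hi
    · rcases Nat.eq_zero_or_pos j with rfl | hj
      · simp
      · simp [Nat.pos_iff_ne_zero.mp hj]
    · simp [Nat.pos_iff_ne_zero.mp hi, Nat.pos_iff_ne_zero.mp (by omega : 0 < i + j)]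

theorem phi_isDP : IsDPSystem A (phi n A b) := by
  constructor
  · intro m
    rw [phi, PowerSeries.coeff_zero_eq_constantCoeff, Emap, map_prod]
    rw [Finset.prod_eq_one]
    intro j _
    show PowerSeries.constantCoeff (PowerSeries.mk _) = 1
    rw [PowerSeries.constantCoeff_mk, pow_zero, one_smul, Finsupp.single_zero, eB_zero]
  · intro k a m
    have h : Emap n A b (a • m) =
        PowerSeries.rescale (algebraMap A (Bmod n A) a) (Emap n A b m) := by
      rw [Emap, Emap, map_prod]
      refine Finset.prod_congr rfl fun j _ => ?_
      rw [map_smul, Finsupp.smul_apply, smul_eq_mul, Ej_rescale]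
    rw [phi, h, PowerSeries.coeff_rescale, ← map_pow, ← Algebra.smul_def, phi]
  · intro k m m'
    have h : Emap n A b (m + m') = Emap n A b m * Emap n A b m' := by
      rw [Emap, Emap, Emap, ← Finset.prod_mul_distrib]
      refine Finset.prod_congr rfl fun j _ => ?_
      rw [map_add, Finsupp.add_apply, Ej_add]
    rw [phi, h, PowerSeries.coeff_mul]
    rfl
  · intro i j m
    exact Emap_dpseq n A b m i j

lemma phi_basis (t : Fin n) (i : ℕ) :
    phi n A b i (b t) = eB n A (Finsupp.single t i) := by
  have h : Emap n A b (b t) = Ej n A 1 t := by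
    rw [Emap, Finset.prod_eq_single t]
    · rw [Module.Basis.repr_self, Finsupp.single_eq_same]
    · intro j _ hj
      rw [Module.Basis.repr_self, Finsupp.single_eq_of_ne' (Ne.symm hj), Ej_zero]
    · intro h; exact absurd (Finset.mem_univ t) h
  rw [phi, h, coeff_Ej, one_pow, one_smul]

lemma eB_prod_single (f : Fin n → ℕ) (s : Finset (Fin n)) :
    ∏ j ∈ s, eB n A (Finsupp.single j (f j)) = eB n A (∑ j ∈ s, Finsupp.single j (f j)) := by
  classical
  induction s using Finset.induction_on with
  | empty => rw [Finset.prod_empty, Finset.sum_empty, eB_zero]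
  | @insert a s ha ih =>
    rw [Finset.prod_insert ha, Finset.sum_insert ha, ih, eB_mul]
    have hN : (∏ t, (((Finsupp.single a (f a)) t + (∑ j ∈ s, Finsupp.single j (f j)) t).choose
        ((Finsupp.single a (f a)) t))) = 1 := by
      refine Finset.prod_eq_one fun t _ => ?_
      by_cases hta : t = a
      · subst hta
        have hS : (∑ j ∈ s, Finsupp.single j (f j)) t = 0 := by
          rw [Finsupp.finset_sum_apply]
          refine Finset.sum_eq_zero fun j hj => ?_
          exact Finsupp.single_eq_of_ne' (fun h => ha (h ▸ hj))
        rw [hS, Finsupp.single_eq_same, Nat.add_zero, Nat.choose_self]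
      · rw [Finsupp.single_eq_of_ne' (fun h => hta (h.symm)), Nat.zero_add, Nat.choose_zero_right]
    rw [hN, one_smul]

lemma phi_prod (α : Fin n → ℕ) :
    ∏ j, phi n A b (α j) (b j) = eB n A (Finsupp.equivFunOnFinite.symm α) := by
  have h1 : ∀ j : Fin n, phi n A b (α j) (b j) = eB n A (Finsupp.single j (α j)) :=
    fun j => phi_basis n A b j (α j)
  rw [Finset.prod_congr rfl fun j _ => h1 j, eB_prod_single]
  congr 1
  ext t
  rw [Finsupp.finset_sum_apply]
  rw [Finset.sum_eq_single t]
  · rw [Finsupp.single_eq_same]; rfl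
  · intro j _ hj; exact Finsupp.single_eq_of_ne' hj
  · intro h; exact absurd (Finset.mem_univ t) h


end DPModel

namespace DPAbstract

lemma IsDPSystem.map_equiv {A : Type u} [CommRing A] {M : Type v} [AddCommGroup M] [Module A M]
    {B : Type*} [CommRing B] [Algebra A B] {C : Type*} [CommRing C] [Algebra A C]
    {φ : ℕ → M → B} (h : IsDPSystem A φ) (e : B ≃ₐ[A] C) :
    IsDPSystem A (fun k m => e (φ k m)) := by
  constructor
  · intro m; rw [h.zero]; exact map_one e
  · intro k a m; rw [h.smul]; exact map_smul e.toLinearEquiv _ _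
  · intro k m m'; rw [h.add, map_sum]; exact Finset.sum_congr rfl fun p _ => map_mul e _ _
  · intro i j m; rw [← map_mul, h.mul]; exact map_nsmul e.toAddEquiv _ _

/-- ULift as an algebra equivalence. -/
noncomputable def uAlg (A : Type u) [CommRing A] (B : Type*) [CommRing B] [Algebra A B] :
    ULift.{v} B ≃ₐ[A] B :=
  AlgEquiv.ofRingEquiv (f := ULift.ringEquiv) fun _ => rfl

variable {A : Type u} [CommRing A] {M : Type v} [AddCommGroup M] [Module A M]
variable (G : DividedPowerAlgebra' A M)

def dpowSet : Set G.Γ := {y | ∃ i m, G.dpow i m = y}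

lemma mem_adjoin_dpowSet (x : G.Γ) : x ∈ Algebra.adjoin A (dpowSet G) := by
  have hmem : ∀ (i : ℕ) (m : M), G.dpow i m ∈ Algebra.adjoin A (dpowSet G) :=
    fun i m => Algebra.subset_adjoin ⟨i, m, rfl⟩
  set ψ : ℕ → M → Algebra.adjoin A (dpowSet G) := fun i m => ⟨G.dpow i m, hmem i m⟩ with hψdef
  have hψ : IsDPSystem A ψ := by
    constructor
    · intro m
      exact Subtype.ext (G.isDP.zero m)
    · intro k a m
      exact Subtype.ext (G.isDP.smul k a m)
    · intro k m m'
      apply Subtype.ext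
      rw [hψdef]
      push_cast
      exact G.isDP.add k m m'
    · intro i j m
      apply Subtype.ext
      rw [hψdef]
      push_cast
      exact G.isDP.mul i j m
  set g := (Algebra.adjoin A (dpowSet G)).val.comp (G.lift ψ hψ) with hgdef
  have hg : ∀ (k : ℕ) (m : M), g (G.dpow k m) = G.dpow k m := by
    intro k m
    rw [hgdef, AlgHom.comp_apply, G.lift_dpow ψ hψ]
    rfl
  have h1 : g = G.lift G.dpow G.isDP := G.lift_unique _ _ g hg
  have h2 : AlgHom.id A G.Γ = G.lift G.dpow G.isDP :=
    G.lift_unique _ _ _ (fun _ _ => rfl)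
  have hgx : g x = x := by rw [h1, ← h2]; rfl
  rw [← hgx]
  exact ((G.lift ψ hψ) x).2

variable {n : ℕ} (b : Module.Basis (Fin n) A M)

/-- Canonical product of divided powers of basis vectors. -/
noncomputable def can (α : Fin n → ℕ) : G.Γ := ∏ j, G.dpow (α j) (b j)

/-- The set of canonical degree-`k` divided power monomials. -/
def P (k : ℕ) : Set G.Γ := {z | ∃ α : Fin n → ℕ, (∑ j, α j) = k ∧ can G b α = z}

lemma can_mem (α : Fin n → ℕ) : can G b α ∈ G.grading (∑ j, α j) :=
  SetLike.prod_mem_graded G.grading α _ (fun j _ => G.dpow_mem (α j) (b j))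

lemma can_mul (α β : Fin n → ℕ) :
    can G b α * can G b β = (∏ j, ((α j + β j).choose (α j))) • can G b (α + β) := by
  rw [can, can, can, ← Finset.prod_mul_distrib]
  have h : ∀ j : Fin n, G.dpow (α j) (b j) * G.dpow (β j) (b j)
      = (((α j + β j).choose (α j) : ℕ) : G.Γ) * G.dpow ((α + β) j) (b j) := by
    intro j
    rw [Pi.add_apply, G.isDP.mul, nsmul_eq_mul]
  rw [Finset.prod_congr rfl fun j _ => h j, Finset.prod_mul_distrib, ← Nat.cast_prod,
    nsmul_eq_mul]

lemma dpow_zero_pos {i : ℕ} (hi : 0 < i) : G.dpow i (0 : M) = 0 := by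
  have h := G.isDP.smul i (0 : A) (0 : M)
  rw [zero_smul, zero_pow (Nat.pos_iff_ne_zero.mp hi), zero_smul] at h
  exact h

lemma can_single (t : Fin n) (p : ℕ) : can G b (Pi.single t p) = G.dpow p (b t) := by
  rw [can, Finset.prod_eq_single t]
  · rw [Pi.single_eq_same]
  · intro j _ hj
    rw [Pi.single_eq_of_ne hj, G.isDP.zero]
  · intro h; exact absurd (Finset.mem_univ t) h

lemma mul_mem_span {k1 k2 : ℕ} {x y : G.Γ} (hx : x ∈ Submodule.span A (P G b k1))
    (hy : y ∈ Submodule.span A (P G b k2)) :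
    x * y ∈ Submodule.span A (P G b (k1 + k2)) := by
  have h : Submodule.span A (P G b k1) * Submodule.span A (P G b k2)
      ≤ Submodule.span A (P G b (k1 + k2)) := by
    rw [Submodule.span_mul_span, Submodule.span_le]
    rintro z ⟨x, hx, y, hy, rfl⟩
    obtain ⟨α, hα, rfl⟩ := hx
    obtain ⟨β, hβ, rfl⟩ := hy
    dsimp only
    rw [SetLike.mem_coe, can_mul]
    refine nsmul_mem (Submodule.subset_span ?_) _
    exact ⟨α + β, by rw [← hα, ← hβ, ← Finset.sum_add_distrib]; rfl, rfl⟩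
  exact h (Submodule.mul_mem_mul hx hy)

lemma dpow_mem_span (i : ℕ) (m : M) : G.dpow i m ∈ Submodule.span A (P G b i) := by
  have key : ∀ s : Finset (Fin n), ∀ (c : Fin n → A) (i : ℕ),
      G.dpow i (∑ j ∈ s, c j • b j) ∈ Submodule.span A (P G b i) := by
    intro s
    induction s using Finset.induction_on with
    | empty =>
      intro c i
      rw [Finset.sum_empty]
      rcases Nat.eq_zero_or_pos i with rfl | hi
      · rw [G.isDP.zero]
        refine Submodule.subset_span ⟨0, by simp, ?_⟩
        rw [can]
        exact Finset.prod_eq_one fun j _ => G.isDP.zero (b j)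
      · rw [dpow_zero_pos G hi]
        exact Submodule.zero_mem _
    | @insert a s ha ih =>
      intro c i
      rw [Finset.sum_insert ha, G.isDP.add]
      refine Submodule.sum_mem _ fun p hp => ?_
      have hpq : p.1 + p.2 = i := Finset.HasAntidiagonal.mem_antidiagonal.mp hp
      rw [G.isDP.smul, smul_mul_assoc]
      refine Submodule.smul_mem _ _ ?_
      rw [← can_single G b a p.1, ← hpq]
      exact mul_mem_span G b
        (Submodule.subset_span ⟨Pi.single a p.1, by
          rw [Finset.sum_pi_single']; simp, rfl⟩) (ih c p.2)
  have hm := Module.Basis.sum_repr b m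
  rw [← hm]
  exact key Finset.univ _ i

lemma grading_mem_span {k : ℕ} {x : G.Γ} (hx : x ∈ G.grading k) :
    x ∈ Submodule.span A (P G b k) := by
  have hadj : x ∈ Submodule.span A ((Submonoid.closure (dpowSet G) : Submonoid G.Γ) : Set G.Γ) := by
    have h := mem_adjoin_dpowSet G x
    rw [← Algebra.adjoin_eq_span]
    exact h
  have hcl : ∀ y ∈ Submonoid.closure (dpowSet G),
      ∃ d, y ∈ G.grading d ∧ y ∈ Submodule.span A (P G b d) := by
    intro y hy
    induction hy using Submonoid.closure_induction with
    | mem y hy =>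
      obtain ⟨i, m, rfl⟩ := hy
      exact ⟨i, G.dpow_mem i m, dpow_mem_span G b i m⟩
    | one =>
      refine ⟨0, SetLike.GradedOne.one_mem, Submodule.subset_span ⟨0, by simp, ?_⟩⟩
      rw [can]
      exact Finset.prod_eq_one fun j _ => G.isDP.zero (b j)
    | mul y z hy hz ihy ihz =>
      obtain ⟨d1, hd1, hs1⟩ := ihy
      obtain ⟨d2, hd2, hs2⟩ := ihz
      exact ⟨d1 + d2, SetLike.mul_mem_graded hd1 hd2, mul_mem_span G b hs1 hs2⟩
  -- the degree-k projection, as a linear map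
  set πk : G.Γ →ₗ[A] G.Γ :=
    (G.grading k).subtype ∘ₗ
      ((DirectSum.component A ℕ (fun i => ↥(G.grading i)) k) ∘ₗ
        (DirectSum.decomposeLinearEquiv G.grading).toLinearMap) with hπdef
  have hπ : ∀ y, πk y = (DirectSum.decompose G.grading y k : G.Γ) := fun y => rfl
  have hx1 : πk x = x := by rw [hπ, DirectSum.decompose_of_mem_same G.grading hx]
  have hx2 : πk x ∈ Submodule.span A (P G b k) := by
    refine Submodule.span_induction ?_ ?_ ?_ ?_ hadj
    · intro y hy
      obtain ⟨d, hyd, hys⟩ := hcl y hy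
      rcases eq_or_ne d k with rfl | hdk
      · rw [hπ, DirectSum.decompose_of_mem_same G.grading hyd]
        exact hys
      · rw [hπ, DirectSum.decompose_of_mem_ne G.grading hyd hdk]
        exact Submodule.zero_mem _
    · rw [map_zero]; exact Submodule.zero_mem _
    · intro y z _ _ hy hz
      rw [map_add]; exact Submodule.add_mem _ hy hz
    · intro a y _ hy
      rw [map_smul]; exact Submodule.smul_mem _ _ hy
  rwa [hx1] at hx2


lemma can_def (G : DividedPowerAlgebra' A M) (b : Module.Basis (Fin n) A M) (α : Fin n → ℕ) :
    can G b α = ∏ j, G.dpow (α j) (b j) := rfl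

lemma P_def (G : DividedPowerAlgebra' A M) (b : Module.Basis (Fin n) A M) (k : ℕ) :
    P G b k = {z | ∃ α : Fin n → ℕ, (∑ j, α j) = k ∧ can G b α = z} := rfl

end DPAbstract

open DPAbstract DPModel

/-- If `M` is a free `A`-module with basis `m_1, …, m_n`, then the `k`-th
graded piece `Γ_k(M)` of the divided power algebra is a free `A`-module with basis the
products of divided powers `m_1^{[i_1]} ⋯ m_n^{[i_n]}` with `i_1 + ⋯ + i_n = k`. -/
theorem gammaGraded_free_on_dividedPowerProducts
    {A : Type u} [CommRing A] {M : Type v} [AddCommGroup M] [Module A M]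
    {n : ℕ} (b : Module.Basis (Fin n) A M)
    (G : DividedPowerAlgebra' A M) (k : ℕ) :
    ∃ bas : Module.Basis {i : Fin n → ℕ // ∑ j, i j = k} A (G.grading k),
      ∀ i : {i : Fin n → ℕ // ∑ j, i j = k},
        (bas i : G.Γ) = ∏ j, G.dpow (i.1 j) (b j) := by
  classical
  -- the canonical family inside the graded piece
  set I := {i : Fin n → ℕ // ∑ j, i j = k} with hI
  set w : I → ↥(G.grading k) := fun i => ⟨can G b i.1, by
    have := can_mem G b i.1; rwa [i.2] at this⟩ with hw
  -- linear independence, via the model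
  set e : ULift.{v} (Bmod n A) ≃ₐ[A] Bmod n A := uAlg A (Bmod n A) with he
  set φ' : ℕ → M → ULift.{v} (Bmod n A) := fun i m => e.symm (phi n A b i m) with hφ'
  have hφ'dp : IsDPSystem A φ' := DPAbstract.IsDPSystem.map_equiv (phi_isDP n A b) e.symm
  set f := G.lift φ' hφ'dp with hf
  set L : G.Γ →ₗ[A] Bmod n A := e.toLinearEquiv.toLinearMap.comp f.toLinearMap with hL
  have hLcan : ∀ α : Fin n → ℕ, L (can G b α) = eB n A (Finsupp.equivFunOnFinite.symm α) := by
    intro α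
    have h1 : L (can G b α) = e (f (∏ j, G.dpow (α j) (b j))) := by rw [can_def]; rfl
    have h2 : (∏ j : Fin n, f (G.dpow (α j) (b j))) = ∏ j : Fin n, φ' (α j) (b j) :=
      Finset.prod_congr rfl fun j _ => G.lift_dpow φ' hφ'dp (α j) (b j)
    rw [h1, map_prod, h2, map_prod, ← phi_prod n A b α]
    exact Finset.prod_congr rfl fun j _ => e.apply_symm_apply _
  have hinj : Function.Injective fun i : I => Finsupp.equivFunOnFinite.symm i.1 :=
    fun i j hij => Subtype.ext (Finsupp.equivFunOnFinite.symm.injective hij)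
  have hind0 : LinearIndependent A fun i : I => eB n A (Finsupp.equivFunOnFinite.symm i.1) := by
    have h := (basB n A).linearIndependent.comp _ hinj
    have heq : (⇑(basB n A) ∘ fun i : I => Finsupp.equivFunOnFinite.symm i.1)
        = fun i : I => eB n A (Finsupp.equivFunOnFinite.symm i.1) :=
      funext fun i => basB_apply n A _
    rwa [heq] at h
  have hindΓ : LinearIndependent A fun i : I => can G b i.1 := by
    refine LinearIndependent.of_comp L ?_
    have heq : (L ∘ fun i : I => can G b i.1)
        = fun i : I => eB n A (Finsupp.equivFunOnFinite.symm i.1) :=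
      funext fun i => hLcan i.1
    rw [heq]
    exact hind0
  have hwind : LinearIndependent A w := by
    refine LinearIndependent.of_comp (G.grading k).subtype ?_
    exact hindΓ
  -- spanning
  have hspan : ⊤ ≤ Submodule.span A (Set.range w) := by
    intro x _
    have hx : (x : G.Γ) ∈ Submodule.span A (P G b k) := grading_mem_span G b x.2
    have hPk : P G b k = (G.grading k).subtype '' Set.range w := by
      rw [P_def]
      ext z
      constructor
      · rintro ⟨α, hα, rfl⟩
        exact ⟨w ⟨α, hα⟩, ⟨⟨α, hα⟩, rfl⟩, rfl⟩
      · rintro ⟨y, ⟨i, rfl⟩, rfl⟩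
        exact ⟨i.1, i.2, rfl⟩
    rw [hPk, ← Submodule.map_span] at hx
    obtain ⟨y, hy, hyx⟩ := hx
    rwa [show y = x from Subtype.ext hyx] at hy
  refine ⟨Module.Basis.mk hwind hspan, fun i => ?_⟩
  rw [Module.Basis.mk_apply]
  show can G b i.1 = _
  rw [can_def]
end

section
/- Let A be a commutative ring and M an A-module. By the universal property of the symmetric algebra there is a unique A-algebra homomorphism Sym_A(M) → Γ_A(M) restricting to the identity on M in degree one; this homomorphism sends m^k to k!·m^{[k]} for every m ∈ M and k ≥ 0. If moreover A is a ℚ-algebra, this homomorphism is an isomorphism of graded A-algebras; in particular for every k the induced map Sym_A^k(M) → Γ_k(M) is an isomorphism of A-modules. -/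
open scoped TensorProduct

universe u v

/-- The divided power algebra `Γ_A(M)`, presented as a graded commutative `A`-algebra
equipped with divided power operations `dpow k : M → Γ_k`, universal among commutative
`A`-algebras receiving a system of divided powers of `M`. -/
structure DividedPowerAlgebraModel (A : Type u) [CommRing A] (M : Type v) [AddCommGroup M]
    [Module A M] where
  Γ : Type (max u v)
  [commRing : CommRing Γ]
  [algebra : Algebra A Γ]
  grading : ℕ → Submodule A Γ
  [gradedAlgebra : GradedAlgebra grading]
  dpow : ℕ → M → Γ
  dpow_mem : ∀ (k : ℕ) (m : M), dpow k m ∈ grading k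
  isDP : IsDPSystem A dpow
  dpow_one_injective : Function.Injective (dpow 1)
  grading_one_eq : grading 1 = Submodule.span A (Set.range (dpow 1))
  lift : ∀ {B : Type (max u v)} [CommRing B] [Algebra A B] (φ : ℕ → M → B),
      IsDPSystem A φ → (Γ →ₐ[A] B)
  lift_dpow : ∀ {B : Type (max u v)} [CommRing B] [Algebra A B] (φ : ℕ → M → B)
      (h : IsDPSystem A φ) (k : ℕ) (m : M), lift φ h (dpow k m) = φ k m
  lift_unique : ∀ {B : Type (max u v)} [CommRing B] [Algebra A B] (φ : ℕ → M → B)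
      (h : IsDPSystem A φ) (g : Γ →ₐ[A] B), (∀ k m, g (dpow k m) = φ k m) → g = lift φ h

attribute [instance] DividedPowerAlgebraModel.commRing DividedPowerAlgebraModel.algebra
  DividedPowerAlgebraModel.gradedAlgebra

/-- The symmetric algebra `Sym_A(M)`, presented as a graded commutative `A`-algebra
containing `M` as the degree-one piece, universal among commutative `A`-algebras
receiving an `A`-linear map from `M`. -/
structure SymmetricAlgebraModel (A : Type u) [CommRing A] (M : Type v) [AddCommGroup M]
    [Module A M] where
  S : Type (max u v)
  [commRing : CommRing S]
  [algebra : Algebra A S]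
  grading : ℕ → Submodule A S
  [gradedAlgebra : GradedAlgebra grading]
  ι : M →ₗ[A] S
  ι_injective : Function.Injective ι
  grading_one_eq : grading 1 = LinearMap.range ι
  lift : ∀ {B : Type (max u v)} [CommRing B] [Algebra A B], (M →ₗ[A] B) → (S →ₐ[A] B)
  lift_ι : ∀ {B : Type (max u v)} [CommRing B] [Algebra A B] (f : M →ₗ[A] B) (m : M),
      lift f (ι m) = f m
  lift_unique : ∀ {B : Type (max u v)} [CommRing B] [Algebra A B] (f : M →ₗ[A] B)
      (g : S →ₐ[A] B), (∀ m, g (ι m) = f m) → g = lift f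

attribute [instance] SymmetricAlgebraModel.commRing SymmetricAlgebraModel.algebra
  SymmetricAlgebraModel.gradedAlgebra

section Aux

variable {A : Type*} [CommRing A] {R : Type*} [CommRing R] [Algebra A R]

theorem aux_grading_eq (𝒜 : ℕ → Submodule A R) [GradedAlgebra 𝒜] (P : ℕ → Submodule A R)
    (hle : ∀ k, P k ≤ 𝒜 k) (htop : ⨆ k, P k = ⊤) (k : ℕ) : 𝒜 k = P k := by
  refine le_antisymm ?_ (hle k)
  intro x hx
  have hx' : x ∈ ⨆ k, P k := htop.ge Submodule.mem_top
  have key : ((DirectSum.decompose 𝒜 x k : 𝒜 k) : R) ∈ P k := by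
    refine Submodule.iSup_induction (motive := fun y => ((DirectSum.decompose 𝒜 y k : 𝒜 k) : R) ∈ P k)
      P hx' ?_ ?_ ?_
    · intro j z hz
      by_cases h : j = k
      · subst h
        rw [DirectSum.decompose_of_mem_same 𝒜 (hle j hz)]
        exact hz
      · rw [DirectSum.decompose_of_mem_ne 𝒜 (hle j hz) h]
        exact zero_mem _
    · simp
    · intro a b ha hb
      rw [DirectSum.decompose_add, DirectSum.add_apply, Submodule.coe_add]
      exact add_mem ha hb
  rwa [DirectSum.decompose_of_mem_same 𝒜 hx] at key

theorem aux_iSup_pow_eq_top (Q : Submodule A R) (h : Algebra.adjoin A (Q : Set R) = ⊤) :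
    ⨆ k, Q ^ k = ⊤ := by
  rw [eq_top_iff]
  intro x _
  have hx : x ∈ Subalgebra.toSubmodule (Algebra.adjoin A (Q : Set R)) := by
    rw [h]; trivial
  rw [Algebra.adjoin_eq_span] at hx
  refine Submodule.span_le.mpr ?_ hx
  intro y hy
  have : ∃ n, y ∈ Q ^ n := by
    refine Submonoid.closure_induction ?_ ?_ ?_ hy
    · intro z hz
      exact ⟨1, by simpa [pow_one] using hz⟩
    · exact ⟨0, by rw [pow_zero]; exact Submodule.one_le.mp le_rfl⟩
    · rintro a b _ _ ⟨m, hm⟩ ⟨n, hn⟩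
      exact ⟨m + n, by rw [pow_add]; exact Submodule.mul_mem_mul hm hn⟩
  obtain ⟨n, hn⟩ := this
  exact Submodule.mem_iSup_of_mem n hn

theorem aux_pow_le_graded (𝒜 : ℕ → Submodule A R) [GradedAlgebra 𝒜] (k : ℕ) :
    𝒜 1 ^ k ≤ 𝒜 k := by
  induction k with
  | zero => rw [pow_zero]; exact Submodule.one_le.mpr SetLike.GradedOne.one_mem
  | succ k ih =>
    rw [pow_succ]
    exact Submodule.mul_le.mpr fun x hx y hy => SetLike.mul_mem_graded (ih hx) hy

end Aux

/-- There is a unique `A`-algebra homomorphism `Sym_A(M) → Γ_A(M)`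
restricting to the identity on `M` in degree one; it sends `m^k` to `k!·m^{[k]}`.
If moreover `A` is a `ℚ`-algebra, it is an isomorphism of graded `A`-algebras; in
particular each `Sym^k_A(M) → Γ_k(M)` is an isomorphism of `A`-modules. -/
theorem symmetricAlgebra_toDividedPowerAlgebra
    {A : Type u} [CommRing A] {M : Type v} [AddCommGroup M] [Module A M]
    (Sym : SymmetricAlgebraModel A M) (G : DividedPowerAlgebraModel A M) :
    (∃! f : Sym.S →ₐ[A] G.Γ, ∀ m : M, f (Sym.ι m) = G.dpow 1 m) ∧
    (∀ f : Sym.S →ₐ[A] G.Γ, (∀ m : M, f (Sym.ι m) = G.dpow 1 m) →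
      (∀ (k : ℕ) (m : M), f (Sym.ι m ^ k) = k.factorial • G.dpow k m) ∧
      (∀ _ : Algebra ℚ A,
        Function.Bijective f ∧
        (∀ k : ℕ, Submodule.map f.toLinearMap (Sym.grading k) = G.grading k) ∧
        (∀ k : ℕ, ∃ g : Sym.grading k ≃ₗ[A] G.grading k,
          ∀ x : Sym.grading k, (g x : G.Γ) = f (x : Sym.S)))) := by
  classical
  have hL : ∃ L : M →ₗ[A] G.Γ, ∀ m, L m = G.dpow 1 m := by
    refine ⟨⟨⟨G.dpow 1, fun m n => ?_⟩, fun a m => ?_⟩, fun m => rfl⟩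
    · rw [G.isDP.add 1 m n,
        show (Finset.HasAntidiagonal.antidiagonal 1 : Finset (ℕ × ℕ)) = {(0, 1), (1, 0)} from rfl]
      simp [G.isDP.zero, add_comm]
    · simpa using G.isDP.smul 1 a m
  obtain ⟨L, hLd⟩ := hL
  constructor
  · refine ⟨Sym.lift L, fun m => by rw [Sym.lift_ι, hLd], fun g hg => ?_⟩
    exact Sym.lift_unique L g fun m => by rw [hg, hLd]
  · intro f hf
    have hpow : ∀ (k : ℕ) (m : M), f (Sym.ι m ^ k) = k.factorial • G.dpow k m := by
      intro k m
      induction k with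
      | zero => simp [G.isDP.zero]
      | succ k ih =>
        rw [pow_succ, map_mul, ih, hf, smul_mul_assoc, G.isDP.mul k 1 m,
          Nat.choose_succ_self_right, smul_smul]
        congr 1
        rw [Nat.factorial_succ]
        ring
    refine ⟨hpow, ?_⟩
    intro hQA
    letI : Algebra ℚ A := hQA
    set cA : ℕ → A := fun k => algebraMap ℚ A ((k.factorial : ℚ))⁻¹ with hcA
    have hfact : ∀ k : ℕ, ((k.factorial : ℚ)) ≠ 0 := fun k =>
      Nat.cast_ne_zero.mpr k.factorial_ne_zero
    have hkey : ∀ i j : ℕ, cA i * cA j = ((i + j).choose i : A) * cA (i + j) := by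
      intro i j
      have hq : ((i.factorial : ℚ))⁻¹ * ((j.factorial : ℚ))⁻¹ =
          ((i + j).choose i : ℚ) * ((i + j).factorial : ℚ)⁻¹ := by
        have h := Nat.add_choose_mul_factorial_mul_factorial i j
        field_simp
        push_cast [← h]
        rw [Nat.choose_symm_add]
        ring
      calc cA i * cA j
          = algebraMap ℚ A (((i.factorial : ℚ))⁻¹ * ((j.factorial : ℚ))⁻¹) := by
            rw [hcA]; rw [map_mul]
        _ = algebraMap ℚ A (((i + j).choose i : ℚ) * ((i + j).factorial : ℚ)⁻¹) := by rw [hq]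
        _ = ((i + j).choose i : A) * cA (i + j) := by
            rw [map_mul, hcA]
            congr 1
            simp
    set ψ : ℕ → M → Sym.S := fun k m => cA k • Sym.ι m ^ k with hψdef
    have hψ : IsDPSystem A ψ := by
      refine ⟨fun m => ?_, fun k a m => ?_, fun k m n => ?_, fun i j m => ?_⟩
      · simp [hψdef, hcA]
      · simp only [hψdef, map_smul, smul_pow]
        rw [smul_comm]
      · simp only [hψdef, map_add]
        rw [(Commute.all (Sym.ι m) (Sym.ι n)).add_pow', Finset.smul_sum]
        refine Finset.sum_congr rfl ?_
        rintro ⟨i, j⟩ hij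
        have hk : i + j = k := Finset.HasAntidiagonal.mem_antidiagonal.mp hij
        rw [smul_mul_smul_comm, hkey i j, hk, ← Nat.cast_smul_eq_nsmul A (k.choose i),
          smul_smul, mul_comm (cA k)]
      · simp only [hψdef]
        rw [smul_mul_smul_comm, ← pow_add, hkey i j,
          ← Nat.cast_smul_eq_nsmul A ((i + j).choose i), smul_smul]
    set g : G.Γ →ₐ[A] Sym.S := G.lift ψ hψ with hgdef
    have hψ1 : ∀ m : M, ψ 1 m = Sym.ι m := by
      intro m
      simp [hψdef, hcA]
    have hgf : g.comp f = AlgHom.id A Sym.S := by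
      have e1 : g.comp f = Sym.lift Sym.ι := by
        refine Sym.lift_unique Sym.ι _ fun m => ?_
        rw [AlgHom.comp_apply, hf m, hgdef, G.lift_dpow, hψ1]
      have e2 : AlgHom.id A Sym.S = Sym.lift Sym.ι := Sym.lift_unique Sym.ι _ fun m => rfl
      rw [e1, e2]
    have hfg : f.comp g = AlgHom.id A G.Γ := by
      have e1 : f.comp g = G.lift G.dpow G.isDP := by
        refine G.lift_unique G.dpow G.isDP _ fun k m => ?_
        rw [AlgHom.comp_apply, hgdef, G.lift_dpow]
        show f (cA k • Sym.ι m ^ k) = G.dpow k m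
        rw [map_smul, hpow, ← Nat.cast_smul_eq_nsmul A (k.factorial), smul_smul]
        have hone : cA k * (k.factorial : A) = 1 := by
          have hc : ((k.factorial : A)) = algebraMap ℚ A ((k.factorial : ℚ)) := by simp
          rw [hcA, hc, ← map_mul, inv_mul_cancel₀ (hfact k), map_one]
        rw [hone, one_smul]
      have e2 : AlgHom.id A G.Γ = G.lift G.dpow G.isDP :=
        G.lift_unique G.dpow G.isDP _ fun k m => rfl
      rw [e1, e2]
    have hbij : Function.Bijective f := by
      refine Function.bijective_iff_has_inverse.mpr ⟨g, fun x => ?_, fun y => ?_⟩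
      · exact DFunLike.congr_fun hgf x
      · exact DFunLike.congr_fun hfg y
    set Q : Submodule A Sym.S := Submodule.span A (Set.range Sym.ι) with hQdef
    have hQ1 : Q = Sym.grading 1 := by
      rw [hQdef, Sym.grading_one_eq, ← LinearMap.coe_range, Submodule.span_eq]
    have hadj : Algebra.adjoin A (Q : Set Sym.S) = ⊤ := by
      have htop : Algebra.adjoin A (Set.range Sym.ι) = ⊤ := by
        set T := Algebra.adjoin A (Set.range Sym.ι) with hT
        have hmem : ∀ m : M, Sym.ι m ∈ T := fun m => Algebra.subset_adjoin ⟨m, rfl⟩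
        let ι' : M →ₗ[A] T :=
          { toFun := fun m => ⟨Sym.ι m, hmem m⟩
            map_add' := fun m n => Subtype.ext (map_add _ _ _)
            map_smul' := fun a m => Subtype.ext (map_smul _ _ _) }
        have e1 : T.val.comp (Sym.lift ι') = Sym.lift Sym.ι := by
          refine Sym.lift_unique Sym.ι _ fun m => ?_
          rw [AlgHom.comp_apply, Sym.lift_ι]
          rfl
        have e2 : AlgHom.id A Sym.S = Sym.lift Sym.ι := Sym.lift_unique Sym.ι _ fun m => rfl
        rw [Algebra.eq_top_iff]
        intro x
        have hx : T.val ((Sym.lift ι') x) = x := by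
          rw [← AlgHom.comp_apply, e1, ← e2]
          rfl
        exact hx ▸ (Sym.lift ι' x).2
      refine top_le_iff.mp ?_
      rw [← htop]
      exact Algebra.adjoin_mono Submodule.subset_span
    have htopS : ⨆ k, Q ^ k = ⊤ := aux_iSup_pow_eq_top Q hadj
    have hleS : ∀ k, Q ^ k ≤ Sym.grading k := fun k => hQ1 ▸ aux_pow_le_graded Sym.grading k
    have hSgrade : ∀ k, Sym.grading k = Q ^ k := aux_grading_eq Sym.grading _ hleS htopS
    have hmapQ : Submodule.map f.toLinearMap Q = G.grading 1 := by
      rw [hQdef, Submodule.map_span, G.grading_one_eq]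
      congr 1
      rw [← Set.range_comp]
      exact congrArg Set.range (funext fun m => hf m)
    have hmapk : ∀ k, Submodule.map f.toLinearMap (Sym.grading k) = G.grading 1 ^ k := by
      intro k
      rw [hSgrade k, Submodule.map_pow Q f k, hmapQ]
    have htopG : ⨆ k, G.grading 1 ^ k = ⊤ := by
      calc ⨆ k, G.grading 1 ^ k
          = ⨆ k, Submodule.map f.toLinearMap (Q ^ k) := by
            refine iSup_congr fun k => ?_
            rw [← hSgrade k, hmapk k]
        _ = Submodule.map f.toLinearMap (⨆ k, Q ^ k) := (Submodule.map_iSup _ _).symm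
        _ = ⊤ := by
            rw [htopS, Submodule.map_top]
            exact LinearMap.range_eq_top.mpr hbij.2
    have hGgrade : ∀ k, G.grading k = G.grading 1 ^ k :=
      aux_grading_eq G.grading _ (aux_pow_le_graded G.grading) htopG
    have hmap : ∀ k, Submodule.map f.toLinearMap (Sym.grading k) = G.grading k := by
      intro k
      rw [hmapk k, ← hGgrade k]
    refine ⟨hbij, hmap, ?_⟩
    intro k
    have hsub : ∀ x ∈ Sym.grading k, f x ∈ G.grading k := fun x hx =>
      hmap k ▸ Submodule.mem_map_of_mem hx
    refine ⟨LinearEquiv.ofBijective (f.toLinearMap.restrict hsub) ⟨?_, ?_⟩, fun x => rfl⟩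
    · intro x y hxy
      exact Subtype.ext (hbij.1 (congrArg Subtype.val hxy))
    · rintro ⟨y, hy⟩
      rw [← hmap k] at hy
      obtain ⟨x, hx, hfx⟩ := hy
      exact ⟨⟨x, hx⟩, Subtype.ext hfx⟩
end

section
/- Let A be a commutative ring, B a commutative A-algebra, and M an A-module. There is a canonical isomorphism of graded B-algebras Γ_A(M) ⊗_A B ≅ Γ_B(M ⊗_A B); in particular, for every k ≥ 0 one has Γ_k(M) ⊗_A B ≅ Γ_k(M ⊗_A B) as B-modules, compatibly with divided powers: m^{[k]} ⊗ 1 corresponds to (m ⊗ 1)^{[k]}. -/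
open scoped TensorProduct

universe u v

section Aux

open Finset

lemma key_choose {R : Type*} [CommRing R] (f g : ℕ → R)
    (hf : ∀ p q, f p * f q = ((p+q).choose p) • f (p+q))
    (hg : ∀ p q, g p * g q = ((p+q).choose p) • g (p+q)) (i j : ℕ) :
    (∑ x ∈ antidiagonal i, f x.1 * g x.2) * (∑ y ∈ antidiagonal j, f y.1 * g y.2)
      = ((i+j).choose i) • ∑ z ∈ antidiagonal (i+j), f z.1 * g z.2 := by
  rw [Finset.sum_mul_sum, Finset.smul_sum]
  have hrhs : ∀ z ∈ antidiagonal (i+j),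
      (i+j).choose i • (f z.1 * g z.2)
        = ∑ x ∈ antidiagonal i, (z.1.choose x.1 * z.2.choose x.2) • (f z.1 * g z.2) := by
    intro z hz
    rw [← Finset.sum_smul]
    congr 1
    rw [← Nat.add_choose_eq, (Finset.HasAntidiagonal.mem_antidiagonal.mp hz)]
  rw [Finset.sum_congr rfl hrhs]
  rw [show ∑ z ∈ antidiagonal (i+j), ∑ x ∈ antidiagonal i, (z.1.choose x.1 * z.2.choose x.2) • (f z.1 * g z.2) = ∑ x ∈ antidiagonal i, ∑ z ∈ antidiagonal (i+j), (z.1.choose x.1 * z.2.choose x.2) • (f z.1 * g z.2) from Finset.sum_comm]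
  refine Finset.sum_congr rfl ?_
  intro x hx
  have hxi := Finset.HasAntidiagonal.mem_antidiagonal.mp hx
  have hterm : ∀ y ∈ antidiagonal j,
      (f x.1 * g x.2) * (f y.1 * g y.2)
        = ((x.1+y.1).choose x.1 * (x.2+y.2).choose x.2) • (f (x.1+y.1) * g (x.2+y.2)) := by
    intro y hy
    calc (f x.1 * g x.2) * (f y.1 * g y.2)
        = (f x.1 * f y.1) * (g x.2 * g y.2) := by ring
      _ = ((x.1+y.1).choose x.1 • f (x.1+y.1)) * ((x.2+y.2).choose x.2 • g (x.2+y.2)) := by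
          rw [hf, hg]
      _ = ((x.1+y.1).choose x.1 * (x.2+y.2).choose x.2) • (f (x.1+y.1) * g (x.2+y.2)) := by
          rw [smul_mul_assoc, mul_smul_comm, smul_smul]
  rw [Finset.sum_congr rfl hterm]
  set h : ℕ × ℕ → R := fun z => (z.1.choose x.1 * z.2.choose x.2) • (f z.1 * g z.2) with hh
  have : ∑ y ∈ antidiagonal j, ((x.1+y.1).choose x.1 * (x.2+y.2).choose x.2) • (f (x.1+y.1) * g (x.2+y.2))
      = ∑ z ∈ (antidiagonal j).map ⟨fun y => (x.1 + y.1, x.2 + y.2), by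
          intro a b hab
          simp only [Prod.mk.injEq] at hab
          exact Prod.ext (by omega) (by omega)⟩, h z := by
    rw [Finset.sum_map]
    rfl
  rw [this]
  refine Finset.sum_subset ?_ ?_
  · intro z hz
    simp only [Finset.mem_map, Function.Embedding.coeFn_mk] at hz
    obtain ⟨y, hy, rfl⟩ := hz
    have := Finset.HasAntidiagonal.mem_antidiagonal.mp hy
    rw [Finset.HasAntidiagonal.mem_antidiagonal]
    change x.1 + y.1 + (x.2 + y.2) = i + j
    omega
  · intro z hz hnz
    have hzij := Finset.HasAntidiagonal.mem_antidiagonal.mp hz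
    have : z.1 < x.1 ∨ z.2 < x.2 := by
      by_contra hc
      push_neg at hc
      apply hnz
      simp only [Finset.mem_map, Function.Embedding.coeFn_mk]
      exact ⟨(z.1 - x.1, z.2 - x.2), Finset.HasAntidiagonal.mem_antidiagonal.mpr (by omega),
        Prod.ext (by change x.1 + (z.1 - x.1) = z.1; omega)
          (by change x.2 + (z.2 - x.2) = z.2; omega)⟩
    rcases this with h1 | h1
    · simp [hh, Nat.choose_eq_zero_of_lt h1]
    · simp [hh, Nat.choose_eq_zero_of_lt h1]

namespace IsDPSystem

variable {A : Type*} [CommRing A] {M : Type*} [AddCommGroup M] [Module A M]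
  {C : Type*} [CommRing C] [Algebra A C]

lemma zero_right {φ : ℕ → M → C} (h : IsDPSystem A φ) {k : ℕ} (hk : k ≠ 0) : φ k 0 = 0 := by
  have := h.smul k 0 0
  rwa [zero_smul, zero_pow hk, zero_smul] at this

lemma comp {φ : ℕ → M → C} (h : IsDPSystem A φ) {C' : Type*} [CommRing C'] [Algebra A C']
    (g : C →ₐ[A] C') : IsDPSystem A (fun k m => g (φ k m)) where
  zero m := by rw [h.zero, map_one]
  smul k a m := by rw [h.smul, map_smul]
  add k m n := by rw [h.add, map_sum]; simp only [map_mul]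
  mul i j m := by rw [← map_mul, h.mul, map_nsmul]

lemma of_comp_injective {φ : ℕ → M → C} {C' : Type*} [CommRing C'] [Algebra A C']
    (g : C →ₐ[A] C') (hg : Function.Injective g)
    (h : IsDPSystem A (fun k m => g (φ k m))) : IsDPSystem A φ where
  zero m := hg (by rw [map_one]; exact h.zero m)
  smul k a m := hg (by rw [map_smul]; exact h.smul k a m)
  add k m n := hg (by rw [map_sum]; simpa only [map_mul] using h.add k m n)
  mul i j m := hg (by rw [map_mul, map_nsmul]; exact h.mul i j m)

end IsDPSystem

end Aux
section Psi

open Finset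

variable {A : Type u} [CommRing A] {M : Type v} [AddCommGroup M] [Module A M]
  (B : Type (max u v)) [CommRing B] [Algebra A B] (G : DividedPowerAlgebra' A M)

namespace DividedPowerAlgebra'

/-- The exponential series of a pure tensor. -/
noncomputable def expS (b : B) (m : M) : PowerSeries (B ⊗[A] G.Γ) :=
  PowerSeries.mk fun k => (b ^ k) ⊗ₜ[A] G.dpow k m

lemma expS_add_m (b : B) (m n : M) : expS B G b (m + n) = expS B G b m * expS B G b n := by
  ext k
  rw [PowerSeries.coeff_mul]
  simp only [expS, PowerSeries.coeff_mk, G.isDP.add k m n, TensorProduct.tmul_sum,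
    Algebra.TensorProduct.tmul_mul_tmul]
  refine Finset.sum_congr rfl fun p hp => ?_
  rw [← pow_add, Finset.HasAntidiagonal.mem_antidiagonal.mp hp]

lemma expS_zero_m (b : B) : expS B G b 0 = 1 := by
  ext k
  cases k with
  | zero =>
    simp [expS, G.isDP.zero, Algebra.TensorProduct.one_def]
  | succ k =>
    simp [expS, G.isDP.zero_right (Nat.succ_ne_zero k)]

lemma expS_add_b (b b' : B) (m : M) :
    expS B G (b + b') m = expS B G b m * expS B G b' m := by
  ext k
  rw [PowerSeries.coeff_mul]
  simp only [expS, PowerSeries.coeff_mk, Algebra.TensorProduct.tmul_mul_tmul]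
  rw [(Commute.all b b').add_pow' k, TensorProduct.sum_tmul]
  refine Finset.sum_congr rfl fun p hp => ?_
  have hp' := Finset.HasAntidiagonal.mem_antidiagonal.mp hp
  rw [G.isDP.mul p.1 p.2 m, hp', TensorProduct.tmul_smul, TensorProduct.smul_tmul']

lemma expS_zero_b (m : M) : expS B G 0 m = 1 := by
  ext k
  cases k with
  | zero => simp [expS, G.isDP.zero, Algebra.TensorProduct.one_def]
  | succ k => simp [expS, zero_pow (Nat.succ_ne_zero k)]

lemma expS_smul (a : A) (b : B) (m : M) : expS B G (a • b) m = expS B G b (a • m) := by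
  ext k
  simp only [expS, PowerSeries.coeff_mk, smul_pow, G.isDP.smul, TensorProduct.tmul_smul,
    TensorProduct.smul_tmul']

/-- The exponential extended to the base-changed module, as an additive monoid morphism
into the multiplicative monoid of power series. -/
noncomputable def expHom : B ⊗[A] M →+ Additive (PowerSeries (B ⊗[A] G.Γ)) :=
  TensorProduct.liftAddHom
    { toFun := fun b =>
        { toFun := fun m => Additive.ofMul (expS B G b m)
          map_zero' := congrArg Additive.ofMul (expS_zero_m B G b)
          map_add' := fun m n => congrArg Additive.ofMul (expS_add_m B G b m n) }
      map_zero' := AddMonoidHom.ext fun m => congrArg Additive.ofMul (expS_zero_b B G m)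
      map_add' := fun b b' => AddMonoidHom.ext fun m =>
        congrArg Additive.ofMul (expS_add_b B G b b' m) }
    (fun a b m => congrArg Additive.ofMul (expS_smul B G a b m))

lemma expHom_tmul (b : B) (m : M) :
    Additive.toMul (expHom B G (b ⊗ₜ[A] m)) = expS B G b m := by
  rw [expHom, TensorProduct.liftAddHom_tmul]
  rfl

lemma expHom_zero : Additive.toMul (expHom B G 0) = 1 := by
  rw [map_zero]; rfl

lemma expHom_add (x y : B ⊗[A] M) :
    Additive.toMul (expHom B G (x + y))
      = Additive.toMul (expHom B G x) * Additive.toMul (expHom B G y) := by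
  rw [map_add]; rfl

/-- The canonical divided-power system on `B ⊗ M` with values in `B ⊗ Γ`. -/
noncomputable def psi (k : ℕ) (x : B ⊗[A] M) : B ⊗[A] G.Γ :=
  PowerSeries.coeff k (Additive.toMul (expHom B G x))

lemma psi_tmul (k : ℕ) (b : B) (m : M) :
    psi B G k (b ⊗ₜ[A] m) = (b ^ k) ⊗ₜ[A] G.dpow k m := by
  rw [psi, expHom_tmul, expS, PowerSeries.coeff_mk]

lemma psi_add (k : ℕ) (x y : B ⊗[A] M) :
    psi B G k (x + y) = ∑ p ∈ antidiagonal k, psi B G p.1 x * psi B G p.2 y := by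
  simp only [psi, expHom_add, PowerSeries.coeff_mul]

lemma psi_zero_right (k : ℕ) :
    psi B G k (0 : B ⊗[A] M) = if k = 0 then 1 else 0 := by
  rw [psi, expHom_zero, PowerSeries.coeff_one]

lemma expHom_smul (b : B) (x : B ⊗[A] M) :
    Additive.toMul (expHom B G (b • x))
      = PowerSeries.rescale (algebraMap B (B ⊗[A] G.Γ) b) (Additive.toMul (expHom B G x)) := by
  induction x using TensorProduct.induction_on with
  | zero => rw [smul_zero, expHom_zero, map_one]
  | tmul b' m =>
    rw [TensorProduct.smul_tmul', expHom_tmul, expHom_tmul, smul_eq_mul]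
    ext k
    rw [PowerSeries.coeff_rescale]
    simp only [expS, PowerSeries.coeff_mk, Algebra.TensorProduct.algebraMap_apply,
      Algebra.algebraMap_self, RingHom.id_apply]
    rw [show (b ⊗ₜ[A] (1 : G.Γ)) ^ k = (b ^ k) ⊗ₜ[A] (1 : G.Γ) by
      rw [Algebra.TensorProduct.tmul_pow, one_pow]]
    rw [Algebra.TensorProduct.tmul_mul_tmul, one_mul, mul_pow]
  | add x y hx hy =>
    rw [smul_add, expHom_add, expHom_add, map_mul, hx, hy]

lemma psi_smul (k : ℕ) (b : B) (x : B ⊗[A] M) :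
    psi B G k (b • x) = b ^ k • psi B G k x := by
  rw [psi, expHom_smul, PowerSeries.coeff_rescale, Algebra.smul_def, map_pow]
  rfl

lemma isDP_psi : IsDPSystem B (psi B G) where
  zero x := by
    induction x using TensorProduct.induction_on with
    | zero => simp [psi_zero_right]
    | tmul b m => simp [psi_tmul, G.isDP.zero, Algebra.TensorProduct.one_def]
    | add x y hx hy =>
      rw [psi_add]
      simp [hx, hy]
  smul := fun k b x => psi_smul B G k b x
  add := fun k x y => psi_add B G k x y
  mul := by
    intro i j x
    induction x using TensorProduct.induction_on generalizing i j with
    | zero =>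
      simp only [psi_zero_right]
      by_cases hi : i = 0 <;> by_cases hj : j = 0 <;>
        simp [hi, hj, Nat.add_eq_zero]
    | tmul b m =>
      simp only [psi_tmul, Algebra.TensorProduct.tmul_mul_tmul, ← pow_add,
        G.isDP.mul i j m, TensorProduct.tmul_smul]
    | add x y hx hy =>
      simp only [psi_add]
      exact key_choose (fun p => psi B G p x) (fun q => psi B G q y)
        (fun p q => hx p q) (fun p q => hy p q) i j

end DividedPowerAlgebra'

end Psi
section Generation

namespace DividedPowerAlgebra'

universe u₁ v₁
variable {A : Type u₁} [CommRing A] {M : Type v₁} [AddCommGroup M] [Module A M]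
  (D : DividedPowerAlgebra' A M)

/-- The set of all divided powers in `Γ`. -/
def dpowSet : Set D.Γ := {x | ∃ k m, D.dpow k m = x}

lemma adjoin_dpowSet : Algebra.adjoin A D.dpowSet = ⊤ := by
  set S := Algebra.adjoin A D.dpowSet with hS
  have hdp : IsDPSystem A (fun k m => (⟨D.dpow k m,
      Algebra.subset_adjoin ⟨k, m, rfl⟩⟩ : S)) := by
    refine IsDPSystem.of_comp_injective S.val Subtype.val_injective ?_
    exact D.isDP
  have h1 : (S.val.comp (D.lift _ hdp)) = D.lift D.dpow D.isDP := by
    apply D.lift_unique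
    intro k m
    rw [AlgHom.comp_apply, D.lift_dpow]
    rfl
  have h2 : AlgHom.id A D.Γ = D.lift D.dpow D.isDP :=
    D.lift_unique _ _ _ (fun k m => rfl)
  rw [eq_top_iff]
  intro x _
  have hx : S.val ((D.lift _ hdp) x) = x := by
    rw [← AlgHom.comp_apply, h1, ← h2]; rfl
  exact hx ▸ ((D.lift _ hdp) x).2

lemma exists_degree_of_mem_closure {x : D.Γ} (hx : x ∈ Submonoid.closure D.dpowSet) :
    ∃ d, x ∈ D.grading d := by
  induction hx using Submonoid.closure_induction with
  | mem z hz => obtain ⟨k, m, rfl⟩ := hz; exact ⟨k, D.dpow_mem k m⟩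
  | one => exact ⟨0, SetLike.one_mem_graded _⟩
  | mul a b ha hb iha ihb =>
    obtain ⟨da, hda⟩ := iha
    obtain ⟨db, hdb⟩ := ihb
    exact ⟨da + db, SetLike.mul_mem_graded hda hdb⟩

lemma grading_le_span (k : ℕ) :
    D.grading k ≤ Submodule.span A
      ((Submonoid.closure D.dpowSet : Set D.Γ) ∩ (D.grading k : Set D.Γ)) := by
  intro x hx
  have htop : Submodule.span A ((Submonoid.closure D.dpowSet : Set D.Γ)) = ⊤ := by
    have h := Algebra.adjoin_eq_span (R := A) (s := D.dpowSet)
    rw [adjoin_dpowSet] at h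
    rw [← h]
    exact Algebra.top_toSubmodule
  have hxmem : x ∈ Submodule.span A ((Submonoid.closure D.dpowSet : Set D.Γ)) := by
    rw [htop]; trivial
  have hproj : (GradedAlgebra.proj D.grading k) x = x := by
    rw [GradedAlgebra.proj_apply, DirectSum.decompose_of_mem_same D.grading hx]
  rw [← hproj]
  have hmap : (GradedAlgebra.proj D.grading k) x ∈
      Submodule.map (GradedAlgebra.proj D.grading k)
        (Submodule.span A ((Submonoid.closure D.dpowSet : Set D.Γ))) :=
    Submodule.mem_map_of_mem hxmem
  rw [Submodule.map_span] at hmap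
  refine Submodule.span_le.mpr ?_ hmap
  rintro y ⟨z, hz, rfl⟩
  obtain ⟨d, hd⟩ := exists_degree_of_mem_closure D hz
  by_cases hdk : d = k
  · subst hdk
    rw [GradedAlgebra.proj_apply, DirectSum.decompose_of_mem_same D.grading hd]
    exact Submodule.subset_span ⟨hz, hd⟩
  · rw [GradedAlgebra.proj_apply, DirectSum.decompose_of_mem_ne D.grading hd hdk]
    exact Submodule.zero_mem _

lemma lift_grading_le {C : Type*} [CommRing C] [Algebra A C]
    (g : D.Γ →ₐ[A] C) (P : ℕ → Submodule A C)
    (hone : (1:C) ∈ P 0)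
    (hmul : ∀ {i j : ℕ} {x y : C}, x ∈ P i → y ∈ P j → x * y ∈ P (i+j))
    (hg : ∀ k m, g (D.dpow k m) ∈ P k)
    {k : ℕ} {x : D.Γ} (hx : x ∈ D.grading k) : g x ∈ P k := by
  have hmono : ∀ y ∈ Submonoid.closure D.dpowSet, ∀ d, y ∈ D.grading d → g y ∈ P d := by
    intro y hy
    induction hy using Submonoid.closure_induction with
    | mem z hz =>
      obtain ⟨k', m, rfl⟩ := hz
      intro d hd
      by_cases hdk : d = k'
      · subst hdk; exact hg d m
      · have h0 : D.dpow k' m = 0 := by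
          by_contra h0
          exact hdk (DirectSum.degree_eq_of_mem_mem D.grading hd (D.dpow_mem k' m) h0)
        rw [h0, map_zero]; exact (P d).zero_mem
    | one =>
      intro d hd
      by_cases hd0 : d = 0
      · subst hd0; rw [map_one]; exact hone
      · have h0 : (1 : D.Γ) = 0 := by
          by_contra h0
          exact hd0 (DirectSum.degree_eq_of_mem_mem D.grading hd (SetLike.one_mem_graded _) h0)
        rw [h0, map_zero]; exact (P d).zero_mem
    | mul a b ha hb iha ihb =>
      intro d hd
      obtain ⟨da, hda⟩ := exists_degree_of_mem_closure D ha
      obtain ⟨db, hdb⟩ := exists_degree_of_mem_closure D hb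
      by_cases hdd : d = da + db
      · subst hdd
        rw [map_mul]
        exact hmul (iha da hda) (ihb db hdb)
      · have h0 : a * b = 0 := by
          by_contra h0
          exact hdd (DirectSum.degree_eq_of_mem_mem D.grading hd
            (SetLike.mul_mem_graded hda hdb) h0)
        rw [h0, map_zero]; exact (P d).zero_mem
  have hsp := grading_le_span D k hx
  refine Submodule.span_induction ?_ ?_ ?_ ?_ hsp
  · rintro y ⟨hy1, hy2⟩
    exact hmono y hy1 k hy2
  · rw [map_zero]; exact (P k).zero_mem
  · intro a b _ _ ha hb
    rw [map_add]; exact (P k).add_mem ha hb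
  · intro a y _ hy
    rw [map_smul]; exact (P k).smul_mem a hy

end DividedPowerAlgebra'

end Generation

open DividedPowerAlgebra'

/-- Base change for divided power algebras: for a commutative `A`-algebra
`B` there is a canonical isomorphism of graded `B`-algebras
`Γ_A(M) ⊗_A B ≅ Γ_B(M ⊗_A B)`; in particular `Γ_k(M) ⊗_A B ≅ Γ_k(M ⊗_A B)` for every `k`,
compatibly with divided powers: `m^{[k]} ⊗ 1` corresponds to `(m ⊗ 1)^{[k]}`. -/
theorem dividedPowerAlgebra_baseChange
    {A : Type u} [CommRing A] {M : Type v} [AddCommGroup M] [Module A M]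
    (B : Type (max u v)) [CommRing B] [Algebra A B]
    (G : DividedPowerAlgebra' A M) (G' : DividedPowerAlgebra' B (B ⊗[A] M)) :
    ∃ e : (B ⊗[A] G.Γ) ≃ₐ[B] G'.Γ,
      (∀ (k : ℕ) (m : M),
        e ((1 : B) ⊗ₜ[A] G.dpow k m) = G'.dpow k ((1 : B) ⊗ₜ[A] m)) ∧
      (∀ k : ℕ,
        Submodule.map e.toLinearMap ((G.grading k).baseChange B) = G'.grading k) := by
  classical
  letI : Algebra A G'.Γ := ((algebraMap B G'.Γ).comp (algebraMap A B)).toAlgebra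
  haveI : IsScalarTower A B G'.Γ := IsScalarTower.of_algebraMap_eq fun a => rfl
  -- the divided-power system on M with values in G'.Γ
  have hφ : IsDPSystem A (fun k (m : M) => G'.dpow k ((1:B) ⊗ₜ[A] m)) := by
    constructor
    · intro m; exact G'.isDP.zero _
    · intro k a m
      have h1 : (1:B) ⊗ₜ[A] (a • m) = (algebraMap A B a) • ((1:B) ⊗ₜ[A] m) := by
        rw [TensorProduct.tmul_smul, algebraMap_smul]
      rw [h1, G'.isDP.smul k (algebraMap A B a) ((1:B) ⊗ₜ[A] m), ← map_pow, algebraMap_smul]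
    · intro k m n
      rw [TensorProduct.tmul_add, G'.isDP.add]
    · intro i j m
      exact G'.isDP.mul i j _
  set f : G.Γ →ₐ[A] G'.Γ := G.lift _ hφ with hfdef
  have hf_dpow : ∀ k m, f (G.dpow k m) = G'.dpow k ((1:B) ⊗ₜ[A] m) := fun k m =>
    G.lift_dpow _ hφ k m
  set F : (B ⊗[A] G.Γ) →ₐ[B] G'.Γ :=
    Algebra.TensorProduct.lift (Algebra.ofId B G'.Γ) f (fun _ _ => Commute.all _ _) with hFdef
  have hF_tmul : ∀ (b : B) (x : G.Γ), F (b ⊗ₜ[A] x) = algebraMap B G'.Γ b * f x := by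
    intro b x
    rw [hFdef, Algebra.TensorProduct.lift_tmul, Algebra.ofId_apply]
  have hψ := DividedPowerAlgebra'.isDP_psi B G
  set Finv : G'.Γ →ₐ[B] B ⊗[A] G.Γ := G'.lift _ hψ with hFinvdef
  have hFinv_dpow : ∀ k x, Finv (G'.dpow k x) = psi B G k x := fun k x =>
    G'.lift_dpow _ hψ k x
  -- F ∘ ψ = dpow'
  have hFψ : ∀ (k : ℕ) (x : B ⊗[A] M), F (psi B G k x) = G'.dpow k x := by
    intro k x
    induction x using TensorProduct.induction_on generalizing k with
    | zero =>
      rw [psi_zero_right]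
      by_cases hk : k = 0
      · subst hk
        rw [G'.isDP.zero]
        simp
      · rw [if_neg hk, map_zero, G'.isDP.zero_right hk]
    | tmul b m =>
      rw [psi_tmul, hF_tmul, hf_dpow]
      have hbm : b ⊗ₜ[A] m = b • ((1:B) ⊗ₜ[A] m) := by
        rw [TensorProduct.smul_tmul', smul_eq_mul, mul_one]
      rw [hbm, G'.isDP.smul k b, Algebra.smul_def, map_pow]
    | add x y hx hy =>
      rw [psi_add, map_sum, G'.isDP.add]
      refine Finset.sum_congr rfl fun p _ => ?_
      rw [map_mul, hx, hy]
  -- F ∘ Finv = id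
  have hFFinv : F.comp Finv = AlgHom.id B G'.Γ := by
    have h1 : F.comp Finv = G'.lift G'.dpow G'.isDP :=
      G'.lift_unique _ _ _ (fun k x => by
        rw [AlgHom.comp_apply, hFinv_dpow, hFψ])
    have h2 : AlgHom.id B G'.Γ = G'.lift G'.dpow G'.isDP :=
      G'.lift_unique _ _ _ (fun k x => rfl)
    rw [h1, ← h2]
  -- Finv ∘ F = id
  have hone_tensor : ∀ x : G.Γ, Finv (F ((1:B) ⊗ₜ[A] x)) = (1:B) ⊗ₜ[A] x := by
    have hsys : IsDPSystem A (fun k m =>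
        (Algebra.TensorProduct.includeRight : G.Γ →ₐ[A] B ⊗[A] G.Γ) (G.dpow k m)) :=
      G.isDP.comp _
    have hg1 : ((Finv.comp F).restrictScalars A).comp
        (Algebra.TensorProduct.includeRight : G.Γ →ₐ[A] B ⊗[A] G.Γ) = G.lift _ hsys := by
      apply G.lift_unique
      intro k m
      simp only [AlgHom.comp_apply, AlgHom.coe_restrictScalars',
        Algebra.TensorProduct.includeRight_apply]
      rw [hF_tmul, map_one, one_mul, hf_dpow, hFinv_dpow, psi_tmul, one_pow]
    have hg2 : (Algebra.TensorProduct.includeRight : G.Γ →ₐ[A] B ⊗[A] G.Γ) = G.lift _ hsys :=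
      G.lift_unique _ _ _ (fun k m => rfl)
    intro x
    have := congrArg (fun (g : G.Γ →ₐ[A] B ⊗[A] G.Γ) => g x) (hg1.trans hg2.symm)
    simpa using this
  have hFinvF : Finv.comp F = AlgHom.id B (B ⊗[A] G.Γ) := by
    apply AlgHom.ext
    intro z
    simp only [AlgHom.comp_apply, AlgHom.id_apply]
    induction z using TensorProduct.induction_on with
    | zero => simp
    | tmul b x =>
      have hbx : b ⊗ₜ[A] x = b • ((1:B) ⊗ₜ[A] x) := by
        rw [TensorProduct.smul_tmul', smul_eq_mul, mul_one]
      rw [hbx, map_smul, map_smul, hone_tensor]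
    | add x y hx hy => rw [map_add, map_add, hx, hy]
  refine ⟨AlgEquiv.ofAlgHom F Finv hFFinv hFinvF, ?_, ?_⟩
  · intro k m
    show F ((1:B) ⊗ₜ[A] G.dpow k m) = _
    rw [hF_tmul, map_one, one_mul, hf_dpow]
  · -- gradings
    intro k
    -- f maps grading into grading'
    have hf_grading : ∀ (k : ℕ) (z : G.Γ), z ∈ G.grading k → f z ∈ G'.grading k := by
      intro k z hz
      have := G.lift_grading_le f (fun i => (G'.grading i).restrictScalars A)
        (by simp only [Submodule.restrictScalars_mem]; exact SetLike.one_mem_graded _)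
        (fun {i j x y} hi hj => by
          simp only [Submodule.restrictScalars_mem] at *
          exact SetLike.mul_mem_graded hi hj)
        (fun i m => by
          simp only [Submodule.restrictScalars_mem]
          rw [hf_dpow]; exact G'.dpow_mem i _) hz
      simpa only [Submodule.restrictScalars_mem] using this
    -- multiplicativity of base-changed grading
    have hmulBC : ∀ {i j : ℕ} {x y : B ⊗[A] G.Γ}, x ∈ (G.grading i).baseChange B →
        y ∈ (G.grading j).baseChange B → x * y ∈ (G.grading (i+j)).baseChange B := by
      intro i j x y hx hy
      have hle : (G.grading i).baseChange B * (G.grading j).baseChange B ≤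
          (G.grading (i+j)).baseChange B := by
        rw [Submodule.baseChange_eq_span, Submodule.baseChange_eq_span, Submodule.span_mul_span]
        apply Submodule.span_le.mpr
        rintro w hw
        rw [Set.mem_mul] at hw
        obtain ⟨u, hu, v, hv, rfl⟩ := hw
        obtain ⟨zu, hzu, rfl⟩ := hu
        obtain ⟨zv, hzv, rfl⟩ := hv
        have : (TensorProduct.mk A B G.Γ 1 zu) * (TensorProduct.mk A B G.Γ 1 zv)
            = (1:B) ⊗ₜ[A] (zu * zv) := by
          simp only [TensorProduct.mk_apply, Algebra.TensorProduct.tmul_mul_tmul, mul_one]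
        rw [this]
        exact Submodule.tmul_mem_baseChange_of_mem 1 (SetLike.mul_mem_graded hzu hzv)
      exact hle (Submodule.mul_mem_mul hx hy)
    have honeBC : (1 : B ⊗[A] G.Γ) ∈ (G.grading 0).baseChange B := by
      rw [Algebra.TensorProduct.one_def]
      exact Submodule.tmul_mem_baseChange_of_mem 1 (SetLike.one_mem_graded _)
    -- ψ lands in the base-changed grading
    have hψ_mem : ∀ (k : ℕ) (x : B ⊗[A] M), psi B G k x ∈ (G.grading k).baseChange B := by
      intro k x
      induction x using TensorProduct.induction_on generalizing k with
      | zero =>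
        rw [psi_zero_right]
        by_cases hk : k = 0
        · subst hk; rw [if_pos rfl]; exact honeBC
        · rw [if_neg hk]; exact Submodule.zero_mem _
      | tmul b m =>
        rw [psi_tmul]
        exact Submodule.tmul_mem_baseChange_of_mem _ (G.dpow_mem k m)
      | add x y hx hy =>
        rw [psi_add]
        refine Submodule.sum_mem _ fun p hp => ?_
        have := hmulBC (hx p.1) (hy p.2)
        rwa [Finset.HasAntidiagonal.mem_antidiagonal.mp hp] at this
    -- Finv maps grading' into base-changed grading
    have hFinv_grading : ∀ (z : G'.Γ), z ∈ G'.grading k →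
        Finv z ∈ (G.grading k).baseChange B := by
      intro z hz
      exact G'.lift_grading_le Finv (fun i => (G.grading i).baseChange B)
        honeBC (fun hi hj => hmulBC hi hj)
        (fun i x => by rw [hFinv_dpow]; exact hψ_mem i x) hz
    apply le_antisymm
    · rw [Submodule.map_le_iff_le_comap, Submodule.baseChange_eq_span, Submodule.span_le]
      rintro _ ⟨z, hz, rfl⟩
      simp only [Submodule.mem_comap, TensorProduct.mk_apply]
      show F ((1:B) ⊗ₜ[A] z) ∈ G'.grading k
      rw [hF_tmul, map_one, one_mul]
      exact hf_grading k z hz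
    · intro y hy
      refine ⟨Finv y, hFinv_grading y hy, ?_⟩
      show F (Finv y) = y
      exact AlgHom.congr_fun hFFinv y
end
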